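/- Let $[\alpha,\beta]$ be a compact interval and let $f,g:[\alpha,\beta]\to\mathbb{R}$ be absolutely continuous functions with $g$ convex. If $f(\alpha)=g(\alpha)$, $f(\beta)=g(\beta)$, and $f(x)<g(x)$ for all $x\in(\alpha,\beta)$, then $\|g'\|_{L^\infty([\alpha,\beta])}\le\|f'\|_{L^\infty([\alpha,\beta])}$. -/

import Mathlib

open MeasureTheory Set intervalIntegral
open scoped ENNReal NNReal Topology

/-- Under the same hypotheses as Statement 0, the `L^∞` norms
(essential suprema on `[α, β]`) satisfy `‖g'‖_∞ ≤ ‖f'‖_∞`. -/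
theorem stmt1 (α β : ℝ) (hαβ : α < β) (f g f' g' : ℝ → ℝ)
    (hf'int : IntervalIntegrable f' volume α β)
    (hg'int : IntervalIntegrable g' volume α β)
    (hf : ∀ x ∈ Icc α β, f x = f α + ∫ t in α..x, f' t)
    (hg : ∀ x ∈ Icc α β, g x = g α + ∫ t in α..x, g' t)
    (hgconv : ConvexOn ℝ (Icc α β) g)
    (ha : f α = g α) (hb : f β = g β)
    (hlt : ∀ x ∈ Ioo α β, f x < g x) :
    eLpNorm g' ⊤ (volume.restrict (Icc α β)) ≤ eLpNorm f' ⊤ (volume.restrict (Icc α β)) := by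
  by_cases hM : eLpNorm f' ⊤ (volume.restrict (Icc α β)) = ⊤
  · rw [hM]; exact le_top
  set m : ℝ := (eLpNorm f' ⊤ (volume.restrict (Icc α β))).toReal with hm
  have hm0 : 0 ≤ m := ENNReal.toReal_nonneg
  -- a.e. bound on f'
  have haef : ∀ᵐ t ∂(volume.restrict (Icc α β)), |f' t| ≤ m := by
    filter_upwards [ae_le_eLpNormEssSup (f := f') (μ := volume.restrict (Icc α β))] with t ht
    have ht' : (‖f' t‖₊ : ℝ≥0∞) ≤ eLpNorm f' ⊤ (volume.restrict (Icc α β)) := by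
      rwa [eLpNorm_exponent_top]
    have := ENNReal.toReal_mono hM ht'
    simpa [Real.norm_eq_abs, hm] using this
  -- f is almost-Lipschitz with constant m
  have hfl : ∀ x ∈ Icc α β, ∀ y ∈ Icc α β, x ≤ y → |f y - f x| ≤ m * (y - x) := by
    intro x hx y hy hxy
    have hix : IntervalIntegrable f' volume α x := hf'int.mono_set (by
      rw [uIcc_of_le hx.1, uIcc_of_le hαβ.le]; exact Icc_subset_Icc le_rfl hx.2)
    have hiy : IntervalIntegrable f' volume α y := hf'int.mono_set (by
      rw [uIcc_of_le hy.1, uIcc_of_le hαβ.le]; exact Icc_subset_Icc le_rfl hy.2)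
    have hsub : f y - f x = ∫ t in x..y, f' t := by
      rw [hf y hy, hf x hx, add_sub_add_left_eq_sub, integral_interval_sub_left hiy hix]
    have hbnd : ∀ᵐ t ∂(volume.restrict (uIoc x y)), ‖f' t‖ ≤ m := by
      apply ae_restrict_of_ae_restrict_of_subset (t := Icc α β)
      · rw [uIoc_of_le hxy]
        exact (Ioc_subset_Icc_self).trans (Icc_subset_Icc hx.1 hy.2)
      · filter_upwards [haef] with t ht using by rwa [Real.norm_eq_abs]
    have hle := intervalIntegral.norm_integral_le_abs_of_norm_le hbnd
      (_root_.intervalIntegrable_const (c := m))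
    rw [intervalIntegral.integral_const, smul_eq_mul,
      abs_of_nonneg (mul_nonneg (by linarith) hm0)] at hle
    rw [hsub]
    calc |∫ t in x..y, f' t| = ‖∫ t in x..y, f' t‖ := (Real.norm_eq_abs _).symm
      _ ≤ (y - x) * m := hle
      _ = m * (y - x) := mul_comm _ _
  -- slope bound for g in the interior
  have hgl : ∀ s u, α < s → s < u → u < β → |g u - g s| ≤ m * (u - s) := by
    intro s u hs hsu hu
    have hsI : s ∈ Icc α β := ⟨hs.le, by linarith⟩
    have huI : u ∈ Icc α β := ⟨by linarith, hu.le⟩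
    have hαI : α ∈ Icc α β := left_mem_Icc.2 hαβ.le
    have hβI : β ∈ Icc α β := right_mem_Icc.2 hαβ.le
    have hup : g u - g s ≤ m * (u - s) := by
      have h1 : (g u - g s) / (u - s) ≤ (g β - g u) / (β - u) :=
        hgconv.slope_mono_adjacent hsI hβI hsu hu
      have hfu : f u < g u := hlt u ⟨by linarith, hu⟩
      have h2 : f β - f u ≤ m * (β - u) :=
        le_trans (le_abs_self _) (hfl u huI β hβI hu.le)
      have h3 : g β - g u ≤ m * (β - u) := by
        have : g β - g u < f β - f u := by rw [← hb]; linarith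
        linarith
      have h4 : (g β - g u) / (β - u) ≤ m := by
        rw [div_le_iff₀ (by linarith : (0:ℝ) < β - u)]; linarith
      have := h1.trans h4
      rw [div_le_iff₀ (by linarith : (0:ℝ) < u - s)] at this
      linarith
    have hlow : -(m * (u - s)) ≤ g u - g s := by
      have h1 : (g s - g α) / (s - α) ≤ (g u - g s) / (u - s) :=
        hgconv.slope_mono_adjacent hαI huI hs hsu
      have hfs : f s < g s := hlt s ⟨hs, by linarith⟩
      have h2 : -(m * (s - α)) ≤ f s - f α :=
        neg_le_of_neg_le (by
          have := (hfl α hαI s hsI hs.le)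
          have := neg_abs_le (f s - f α)
          linarith [abs_le.1 (hfl α hαI s hsI hs.le)])
      have h3 : -(m * (s - α)) ≤ g s - g α := by
        have : f s - f α < g s - g α := by rw [← ha]; linarith
        linarith
      have h4 : -m ≤ (g s - g α) / (s - α) := by
        rw [le_div_iff₀ (by linarith : (0:ℝ) < s - α)]; linarith
      have := h4.trans h1
      rw [le_div_iff₀ (by linarith : (0:ℝ) < u - s)] at this
      linarith
    exact abs_le.2 ⟨hlow, hup⟩
  -- integrability of g' on Icc
  have hgInt : IntegrableOn g' (Icc α β) volume :=
    hg'int.1.congr_set_ae (Ioc_ae_eq_Icc (μ := volume)).symm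
  have hloc : LocallyIntegrable ((Icc α β).indicator g') volume :=
    (hgInt.integrable_indicator measurableSet_Icc).locallyIntegrable
  have hLDT := (IsUnifLocDoublingMeasure.vitaliFamily (volume : Measure ℝ) 1).ae_tendsto_average
    hloc
  -- a.e. interior membership
  have hIoo : ∀ᵐ t ∂(volume.restrict (Icc α β)), t ∈ Ioo α β := by
    have h1 : ∀ᵐ t ∂(volume.restrict (Icc α β)), t ∈ Icc α β :=
      ae_restrict_mem measurableSet_Icc
    have h2 : ∀ᵐ t ∂(volume.restrict (Icc α β)), t ∉ ({α, β} : Set ℝ) := by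
      apply ae_restrict_of_ae
      have hz : volume ({α, β} : Set ℝ) = 0 :=
        ((Set.finite_singleton β).insert α).measure_zero _
      exact measure_eq_zero_iff_ae_notMem.1 hz
    filter_upwards [h1, h2] with t h1 h2
    rcases h1.1.lt_or_eq with h | h
    · rcases h1.2.lt_or_eq with h' | h'
      · exact ⟨h, h'⟩
      · exact absurd (by simp [h']) h2
    · exact absurd (by simp [← h]) h2
  -- a.e. bound on g'
  have haeg : ∀ᵐ t ∂(volume.restrict (Icc α β)), |g' t| ≤ m := by
    filter_upwards [ae_restrict_of_ae hLDT, hIoo] with t ht htI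
    have htend : Filter.Tendsto (fun y => ⨍ s in Icc t y, (Icc α β).indicator g' s)
        (nhdsWithin t (Ioi t)) (nhds ((Icc α β).indicator g' t)) :=
      ht.comp (Real.tendsto_Icc_vitaliFamily_right t)
    have hev : ∀ᶠ y in nhdsWithin t (Ioi t),
        |⨍ s in Icc t y, (Icc α β).indicator g' s| ≤ m := by
      filter_upwards [Ioo_mem_nhdsGT_of_mem ⟨le_refl t, htI.2⟩] with y hy
      have hsub : Icc t y ⊆ Icc α β := Icc_subset_Icc htI.1.le hy.2.le
      have hyI : y ∈ Icc α β := ⟨by linarith [htI.1, hy.1], hy.2.le⟩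
      have htII : t ∈ Icc α β := ⟨htI.1.le, htI.2.le⟩
      have hit : IntervalIntegrable g' volume α t := hg'int.mono_set (by
        rw [uIcc_of_le htII.1, uIcc_of_le hαβ.le]; exact Icc_subset_Icc le_rfl htII.2)
      have hiy : IntervalIntegrable g' volume α y := hg'int.mono_set (by
        rw [uIcc_of_le hyI.1, uIcc_of_le hαβ.le]; exact Icc_subset_Icc le_rfl hyI.2)
      have h1 : ∫ s in Icc t y, (Icc α β).indicator g' s = g y - g t := by
        rw [setIntegral_indicator measurableSet_Icc, inter_eq_self_of_subset_left hsub,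
          integral_Icc_eq_integral_Ioc, ← intervalIntegral.integral_of_le hy.1.le,
          hg y hyI, hg t htII, add_sub_add_left_eq_sub, integral_interval_sub_left hiy hit]
      have h2 : ⨍ s in Icc t y, (Icc α β).indicator g' s = (y - t)⁻¹ * (g y - g t) := by
        rw [setAverage_eq, h1, measureReal_def, Real.volume_Icc, ENNReal.toReal_ofReal (by linarith [hy.1]),
          smul_eq_mul]
      rw [h2, abs_mul, abs_inv, abs_of_nonneg (by linarith [hy.1] : (0:ℝ) ≤ y - t)]
      rw [inv_mul_le_iff₀ (by linarith [hy.1] : (0:ℝ) < y - t)]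
      calc |g y - g t| ≤ m * (y - t) := hgl t y htI.1 hy.1 hy.2
        _ = (y - t) * m := mul_comm _ _
    have hfinal := le_of_tendsto htend.abs hev
    rwa [indicator_of_mem (mem_of_mem_of_subset htI Ioo_subset_Icc_self) g'] at hfinal
  -- conclude
  calc eLpNorm g' ⊤ (volume.restrict (Icc α β))
      ≤ (volume.restrict (Icc α β)) univ ^ (⊤ : ℝ≥0∞).toReal⁻¹ * ENNReal.ofReal m :=
        eLpNorm_le_of_ae_bound (haeg.mono fun t ht => by rwa [Real.norm_eq_abs])
    _ = ENNReal.ofReal m := by simp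
    _ = eLpNorm f' ⊤ (volume.restrict (Icc α β)) := ENNReal.ofReal_toReal hM
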